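/- Suppose θ : Y → X is a stability map. Then for every layer point (s,D) of Γ_k(Y) one has i_*(θ_*(s,D)) ≤ σ_*(s,D) in Γ_k(Y). -/

import Mathlib

variable {Z : Type*} [MetricSpace Z]

/-- Vertex set `V_{s,k}(X)` of the degree-Rips complex: points of `X` having at
least `k` other points of `X` within distance `s`. -/
def drVertex (X : Set Z) (k : ℕ) (s : ℝ) : Set Z :=
  {x ∈ X | k ≤ {y ∈ X | y ≠ x ∧ dist x y ≤ s}.ncard}

/-- The generating relation for components: two vertices at distance at most `s`. -/
def drStep (X : Set Z) (k : ℕ) (s : ℝ) (x y : Z) : Prop :=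
  x ∈ drVertex X k s ∧ y ∈ drVertex X k s ∧ dist x y ≤ s

/-- `C` is a degree-Rips component (an element of `π₀ L_{s,k}(X)`): the class of
some vertex `x` under the equivalence relation generated by `drStep`. -/
def drComp (X : Set Z) (k : ℕ) (s : ℝ) (C : Set Z) : Prop :=
  ∃ x ∈ drVertex X k s, C = {y | Relation.ReflTransGen (drStep X k s) x y}

/-- `(t, C)` is a layer point of `Γ_k(X)`: it is an element of the hierarchy, and
every element `(s, D) ≤ (t, C)` with `s < t` has `D` a proper subset of `C`. -/
def IsLayer (X : Set Z) (k : ℕ) (t : ℝ) (C : Set Z) : Prop :=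
  0 ≤ t ∧ drComp X k t C ∧
    ∀ s D, 0 ≤ s → drComp X k s D → s < t → D ⊆ C → D ⊂ C

/-- `(t, C)` is a branch point of `Γ_k(X)`. -/
def IsBranch (X : Set Z) (k : ℕ) (t : ℝ) (C : Set Z) : Prop :=
  0 ≤ t ∧ drComp X k t C ∧
    ((∀ s D, 0 ≤ s → drComp X k s D → s < t → ¬D ⊆ C) ∨
      ∃ s₀, s₀ < t ∧ ∀ s, s₀ ≤ s → s < t →
        ∃ D₁ D₂, drComp X k s D₁ ∧ drComp X k s D₂ ∧ D₁ ≠ D₂ ∧ D₁ ⊆ C ∧ D₂ ⊆ C)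

/-- `(t, D)` is the maximal layer point below the element `(u, C)` of `Γ_k(X)`:
it is a layer point, `(t, D) ≤ (u, C)`, and every layer point below `(u, C)`
is below `(t, D)`. -/
def IsMaxLayerBelow (X : Set Z) (k : ℕ) (u : ℝ) (C : Set Z) (t : ℝ) (D : Set Z) : Prop :=
  IsLayer X k t D ∧ t ≤ u ∧ D ⊆ C ∧
    ∀ t' D', IsLayer X k t' D' → t' ≤ u → D' ⊆ C → t' ≤ t ∧ D' ⊆ D

/-- `t` is a layer parameter of `X`. -/
def IsLayerParam (X : Set Z) (k : ℕ) (t : ℝ) : Prop :=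
  ∃ C, IsLayer X k t C

/-- A stability map `θ : Y → X` (encoded as a map `Z → Z` carrying `Y` into `X`). -/
def IsStabilityMap (X Y : Set Z) (k : ℕ) (r : ℝ) (θ : Z → Z) : Prop :=
  (∀ y ∈ Y, θ y ∈ X) ∧
    ∀ s : ℝ, 0 ≤ s →
      (∀ y₁ y₂, y₁ ∈ drVertex Y k s → y₂ ∈ drVertex Y k s → dist y₁ y₂ ≤ s →
          θ y₁ ∈ drVertex X k (s + 2 * r) ∧ θ y₂ ∈ drVertex X k (s + 2 * r) ∧
          dist (θ y₁) (θ y₂) ≤ s + 2 * r) ∧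
      (∀ x ∈ drVertex X k s, ∃ C, drComp X k (s + 2 * r) C ∧ x ∈ C ∧ θ x ∈ C) ∧
      (∀ y ∈ drVertex Y k s, ∃ D, drComp Y k (s + 2 * r) D ∧ y ∈ D ∧ θ y ∈ D)

/-- Vertices of the degree-Rips complex at scale infinity: points with at least
`k` other points. -/
def drVertexInf (W : Set Z) (k : ℕ) : Set Z :=
  {w ∈ W | k ≤ {w' ∈ W | w' ≠ w}.ncard}

/-- Phase change numbers: distances between distinct vertices at scale infinity. -/
def IsPhaseChange (W : Set Z) (k : ℕ) (t : ℝ) : Prop :=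
  ∃ w₁ ∈ drVertexInf W k, ∃ w₂ ∈ drVertexInf W k, w₁ ≠ w₂ ∧ t = dist w₁ w₂

section Helpers

variable {X Y W : Set Z} {k : ℕ}

lemma drVertex_mono_scale (hW : W.Finite) {s t : ℝ} (hst : s ≤ t) :
    drVertex W k s ⊆ drVertex W k t := by
  intro x hx
  refine ⟨hx.1, le_trans hx.2 (Set.ncard_le_ncard ?_ (hW.subset (fun y hy => hy.1)))⟩
  exact fun y hy => ⟨hy.1, hy.2.1, le_trans hy.2.2 hst⟩

lemma drVertex_mono_set (hY : Y.Finite) (hXY : X ⊆ Y) {s : ℝ} :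
    drVertex X k s ⊆ drVertex Y k s := by
  intro x hx
  refine ⟨hXY hx.1, le_trans hx.2 (Set.ncard_le_ncard ?_ (hY.subset (fun y hy => hy.1)))⟩
  exact fun y hy => ⟨hXY hy.1, hy.2⟩

lemma drStep_mono_scale (hW : W.Finite) {s t : ℝ} (hst : s ≤ t) {x y : Z}
    (h : drStep W k s x y) : drStep W k t x y :=
  ⟨drVertex_mono_scale hW hst h.1, drVertex_mono_scale hW hst h.2.1, le_trans h.2.2 hst⟩

lemma drStep_mono_set (hY : Y.Finite) (hXY : X ⊆ Y) {s : ℝ} {x y : Z}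
    (h : drStep X k s x y) : drStep Y k s x y :=
  ⟨drVertex_mono_set hY hXY h.1, drVertex_mono_set hY hXY h.2.1, h.2.2⟩

lemma drStep_symm {s : ℝ} : Symmetric (drStep W k s) := by
  intro x y h; exact ⟨h.2.1, h.1, dist_comm x y ▸ h.2.2⟩

lemma drRel_symm {s : ℝ} {x y : Z}
    (h : Relation.ReflTransGen (drStep W k s) x y) :
    Relation.ReflTransGen (drStep W k s) y x :=
  (@Relation.ReflTransGen.stdSymm _ _ ⟨drStep_symm⟩).symm _ _ h

/-- Two components containing a common point coincide. -/
lemma drComp_eq_of_mem {s : ℝ} {C C' : Set Z} (hC : drComp W k s C)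
    (hC' : drComp W k s C') {z : Z} (hz : z ∈ C) (hz' : z ∈ C') : C = C' := by
  obtain ⟨x, -, rfl⟩ := hC
  obtain ⟨x', -, rfl⟩ := hC'
  ext w
  constructor
  · intro hw
    exact hz'.trans ((drRel_symm hz).trans hw)
  · intro hw
    exact hz.trans ((drRel_symm hz').trans hw)

/-- A component at a smaller scale meeting one at a larger scale is contained in it. -/
lemma drComp_subset_of_mem (hW : W.Finite) {s t : ℝ} (hst : s ≤ t)
    {C C' : Set Z} (hC : drComp W k s C) (hC' : drComp W k t C')
    {z : Z} (hz : z ∈ C) (hz' : z ∈ C') : C ⊆ C' := by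
  obtain ⟨x, -, rfl⟩ := hC
  obtain ⟨x', -, rfl⟩ := hC'
  intro w hw
  have h1 : Relation.ReflTransGen (drStep W k t) z w :=
    Relation.ReflTransGen.mono (fun a b h => drStep_mono_scale hW hst h) _ _ ((drRel_symm hz).trans hw)
  exact hz'.trans h1

/-- An `X`-component is contained in any `Y`-component (same scale) meeting it. -/
lemma drComp_subset_of_mem_set (hY : Y.Finite) (hXY : X ⊆ Y) {s : ℝ}
    {C C' : Set Z} (hC : drComp X k s C) (hC' : drComp Y k s C')
    {z : Z} (hz : z ∈ C) (hz' : z ∈ C') : C ⊆ C' := by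
  obtain ⟨x, -, rfl⟩ := hC
  obtain ⟨x', -, rfl⟩ := hC'
  intro w hw
  have h1 : Relation.ReflTransGen (drStep Y k s) z w :=
    Relation.ReflTransGen.mono (fun a b h => drStep_mono_set hY hXY h) _ _ ((drRel_symm hz).trans hw)
  exact hz'.trans h1

lemma drComp_nonempty {s : ℝ} {C : Set Z} (hC : drComp W k s C) : C.Nonempty := by
  obtain ⟨x, -, rfl⟩ := hC
  exact ⟨x, Relation.ReflTransGen.refl⟩

end Helpers

/-- for a stability map `θ : Y → X` and every layer point `(s, D)`
of `Γ_k(Y)`, one has `i_* (θ_* (s, D)) ≤ σ_* (s, D)` in `Γ_k(Y)`.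
Here `θ_*(s, D) = (t₁, E₁)` is the maximal layer point of `Γ_k(X)` below
`(s + 2r, E₁')` where `E₁'` is the component containing `θ(D)`,
`i_*(t₁, E₁) = (t₂, E₂)` is the maximal layer point of `Γ_k(Y)` below
`(t₁, E₂')` where `E₂' = i(E₁)` is the component of `Y` at scale `t₁`
containing `E₁`, and `σ_*(s, D) = (v, F)` is the maximal layer point of
`Γ_k(Y)` below `(s + 2r, D')` where `D'` is the component at scale `s + 2r`
containing `D`. -/
theorem i_star_theta_star_le_sigma_star (X Y : Set Z)
    (hXfin : X.Finite) (hYfin : Y.Finite) (hXY : X ⊆ Y)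
    (k : ℕ) (r : ℝ) (hr : 0 < r) (θ : Z → Z) (hθ : IsStabilityMap X Y k r θ)
    (s : ℝ) (D : Set Z) (hD : IsLayer Y k s D)
    (E₁' : Set Z) (hE₁' : drComp X k (s + 2 * r) E₁') (hθD : θ '' D ⊆ E₁')
    (t₁ : ℝ) (E₁ : Set Z) (h₁ : IsMaxLayerBelow X k (s + 2 * r) E₁' t₁ E₁)
    (E₂' : Set Z) (hE₂' : drComp Y k t₁ E₂') (hE₁E₂' : E₁ ⊆ E₂')
    (t₂ : ℝ) (E₂ : Set Z) (h₂ : IsMaxLayerBelow Y k t₁ E₂' t₂ E₂)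
    (D' : Set Z) (hD' : drComp Y k (s + 2 * r) D') (hDD' : D ⊆ D')
    (v : ℝ) (F : Set Z) (h₃ : IsMaxLayerBelow Y k (s + 2 * r) D' v F) :
    t₂ ≤ v ∧ E₂ ⊆ F := by
  have hs0 : (0:ℝ) ≤ s := hD.1
  have ht₁ : t₁ ≤ s + 2 * r := h₁.2.1
  have ht₂ : t₂ ≤ s + 2 * r := le_trans h₂.2.1 ht₁
  -- a vertex point of D
  obtain ⟨y₀, hy₀v, hDeq⟩ := hD.2.1
  have hy₀D : y₀ ∈ D := hDeq ▸ Relation.ReflTransGen.refl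
  -- θ y₀ ∈ D'
  obtain ⟨Dc, hDc, hy₀Dc, hθy₀Dc⟩ := (hθ.2 s hs0).2.2 y₀ hy₀v
  have hD'Dc : D' = Dc := drComp_eq_of_mem hD' hDc (hDD' hy₀D) hy₀Dc
  have hθy₀D' : θ y₀ ∈ D' := hD'Dc ▸ hθy₀Dc
  -- θ y₀ ∈ E₁'
  have hθy₀E₁' : θ y₀ ∈ E₁' := hθD ⟨y₀, hy₀D, rfl⟩
  -- E₁' ⊆ D'
  have hE₁'D' : E₁' ⊆ D' :=
    drComp_subset_of_mem_set hYfin hXY hE₁' hD' hθy₀E₁' hθy₀D'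
  -- a point of E₁
  obtain ⟨x₁, hx₁E₁⟩ := drComp_nonempty h₁.1.2.1
  have hx₁D' : x₁ ∈ D' := hE₁'D' (h₁.2.2.1 hx₁E₁)
  have hx₁E₂' : x₁ ∈ E₂' := hE₁E₂' hx₁E₁
  -- E₂' ⊆ D'
  have hE₂'D' : E₂' ⊆ D' :=
    drComp_subset_of_mem hYfin ht₁ hE₂' hD' hx₁E₂' hx₁D'
  have hE₂D' : E₂ ⊆ D' := fun w hw => hE₂'D' (h₂.2.2.1 hw)
  exact h₃.2.2.2 t₂ E₂ h₂.1 ht₂ hE₂D'
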